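/- For all x > 1, 0 < f(x) ≤ 2^(−2/3), where f(x) = ((3/4)·x·√(x²−1) − (3/4)·arcosh(x))^(2/3) / (x² − 1). -/

import Mathlib

noncomputable def arcosh (x : ℝ) : ℝ := Real.log (x + Real.sqrt (x ^ 2 - 1))


private lemma sq1_pos {x : ℝ} (hx : 1 < x) : 0 < x ^ 2 - 1 := by nlinarith

private lemma sqrt1_pos {x : ℝ} (hx : 1 < x) : 0 < Real.sqrt (x ^ 2 - 1) :=
  Real.sqrt_pos.mpr (sq1_pos hx)

private lemma hasDerivAt_s {x : ℝ} (hx : 1 < x) :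
    HasDerivAt (fun y => Real.sqrt (y ^ 2 - 1)) (x / Real.sqrt (x ^ 2 - 1)) x := by
  have h1 : HasDerivAt (fun y : ℝ => y ^ 2 - 1) (2 * x) x := by
    simpa using ((hasDerivAt_pow 2 x).sub_const 1)
  have h2 := (Real.hasDerivAt_sqrt (ne_of_gt (sq1_pos hx))).comp x h1
  refine h2.congr_deriv (Eq.symm ?_)
  field_simp

private lemma hasDerivAt_arcosh {x : ℝ} (hx : 1 < x) :
    HasDerivAt arcosh (1 / Real.sqrt (x ^ 2 - 1)) x := by
  have hs := sqrt1_pos hx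
  have h1 : HasDerivAt (fun y => y + Real.sqrt (y ^ 2 - 1))
      (1 + x / Real.sqrt (x ^ 2 - 1)) x := (hasDerivAt_id x).add (hasDerivAt_s hx)
  have hne : x + Real.sqrt (x ^ 2 - 1) ≠ 0 := by positivity
  have h2 := h1.log hne
  refine h2.congr_deriv (Eq.symm ?_)
  rw [div_eq_div_iff hs.ne' hne]
  field_simp
  ring

private lemma contOn_F : ContinuousOn (fun y => y * Real.sqrt (y ^ 2 - 1) - arcosh y)
    (Set.Ici (1:ℝ)) := by
  have hc : Continuous (fun y : ℝ => y + Real.sqrt (y ^ 2 - 1)) := by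
    continuity
  apply ContinuousOn.sub
  · exact (continuous_id.mul (by continuity)).continuousOn
  · apply ContinuousOn.log hc.continuousOn
    intro y hy
    have : (1:ℝ) ≤ y := hy
    have := Real.sqrt_nonneg (y ^ 2 - 1)
    positivity

private lemma F_pos {x : ℝ} (hx : 1 < x) :
    0 < x * Real.sqrt (x ^ 2 - 1) - arcosh x := by
  have hmono : StrictMonoOn (fun y => y * Real.sqrt (y ^ 2 - 1) - arcosh y) (Set.Ici 1) := by
    apply strictMonoOn_of_deriv_pos (convex_Ici 1) contOn_F
    intro y hy
    rw [interior_Ici] at hy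
    have hy1 : 1 < y := hy
    have hs := sqrt1_pos hy1
    have hd : HasDerivAt (fun y => y * Real.sqrt (y ^ 2 - 1) - arcosh y)
        (2 * Real.sqrt (y ^ 2 - 1)) y := by
      have := ((hasDerivAt_id y).mul (hasDerivAt_s hy1)).sub (hasDerivAt_arcosh hy1)
      refine this.congr_deriv (Eq.symm ?_)
      have hsq : Real.sqrt (y ^ 2 - 1) ^ 2 = y ^ 2 - 1 := Real.sq_sqrt (sq1_pos hy1).le
      simp only [id]
      field_simp
      nlinarith
    rw [hd.deriv]
    positivity
  have h0 : (fun y => y * Real.sqrt (y ^ 2 - 1) - arcosh y) 1 = 0 := by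
    simp [arcosh]
  have := hmono (Set.self_mem_Ici) (le_of_lt hx) hx
  rw [h0] at this
  exact this

private lemma F_le {x : ℝ} (hx : 1 < x) :
    x * Real.sqrt (x ^ 2 - 1) - arcosh x ≤
      (2 / 3) * ((x ^ 2 - 1) * Real.sqrt (x ^ 2 - 1)) := by
  set G : ℝ → ℝ := fun y =>
    (2 / 3) * ((y ^ 2 - 1) * Real.sqrt (y ^ 2 - 1)) - (y * Real.sqrt (y ^ 2 - 1) - arcosh y)
  have hmono : StrictMonoOn G (Set.Ici 1) := by
    apply strictMonoOn_of_deriv_pos (convex_Ici 1)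
    · apply ContinuousOn.sub _ contOn_F
      apply ContinuousOn.mul continuousOn_const
      exact (Continuous.mul (by continuity) (by continuity)).continuousOn
    · intro y hy
      rw [interior_Ici] at hy
      have hy1 : 1 < y := hy
      have hs := sqrt1_pos hy1
      have hsq : Real.sqrt (y ^ 2 - 1) ^ 2 = y ^ 2 - 1 := Real.sq_sqrt (sq1_pos hy1).le
      have hd : HasDerivAt G (2 * (y - 1) * Real.sqrt (y ^ 2 - 1)) y := by
        have h1 : HasDerivAt (fun y : ℝ => y ^ 2 - 1) (2 * y) y := by
          simpa using ((hasDerivAt_pow 2 y).sub_const 1)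
        have h2 := (h1.mul (hasDerivAt_s hy1)).const_mul (2/3 : ℝ)
        have h3 := ((hasDerivAt_id y).mul (hasDerivAt_s hy1)).sub (hasDerivAt_arcosh hy1)
        have := h2.sub h3
        refine this.congr_deriv (Eq.symm ?_)
        simp only [id]
        field_simp
        linear_combination (2*y-3) * hsq
      rw [hd.deriv]
      have : 0 < y - 1 := by linarith
      positivity
  have h0 : G 1 = 0 := by simp [G, arcosh]
  have := hmono (Set.self_mem_Ici) (le_of_lt hx) hx
  rw [h0] at this
  simp only [G] at this
  linarith

theorem stmt_3 (x : ℝ) (hx : 1 < x) :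
    0 < ((3 / 4) * x * Real.sqrt (x ^ 2 - 1) - (3 / 4) * arcosh x) ^ ((2 : ℝ) / 3) /
          (x ^ 2 - 1) ∧
      ((3 / 4) * x * Real.sqrt (x ^ 2 - 1) - (3 / 4) * arcosh x) ^ ((2 : ℝ) / 3) /
          (x ^ 2 - 1) ≤ (2 : ℝ) ^ (-(2 : ℝ) / 3) := by
  have ht : 0 < x ^ 2 - 1 := sq1_pos hx
  have hF := F_pos hx
  have hg : 0 < (3 / 4) * x * Real.sqrt (x ^ 2 - 1) - (3 / 4) * arcosh x := by linarith
  constructor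
  · exact div_pos (Real.rpow_pos_of_pos hg _) ht
  · rw [div_le_iff₀ ht]
    have hle : (3 / 4) * x * Real.sqrt (x ^ 2 - 1) - (3 / 4) * arcosh x ≤
        (1 / 2) * ((x ^ 2 - 1) * Real.sqrt (x ^ 2 - 1)) := by
      have := F_le hx
      linarith
    calc ((3 / 4) * x * Real.sqrt (x ^ 2 - 1) - (3 / 4) * arcosh x) ^ ((2 : ℝ) / 3)
        ≤ ((1 / 2) * ((x ^ 2 - 1) * Real.sqrt (x ^ 2 - 1))) ^ ((2 : ℝ) / 3) :=
          Real.rpow_le_rpow hg.le hle (by norm_num)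
      _ = (2 : ℝ) ^ (-(2 : ℝ) / 3) * (x ^ 2 - 1) := by
          have h1 : (x ^ 2 - 1) * Real.sqrt (x ^ 2 - 1) = (x ^ 2 - 1) ^ ((3 : ℝ) / 2) := by
            rw [Real.sqrt_eq_rpow, show (3:ℝ)/2 = 1 + 1/2 by norm_num, Real.rpow_add ht,
              Real.rpow_one]
          have h2 : ((x ^ 2 - 1) ^ ((3:ℝ)/2)) ^ ((2:ℝ)/3) = x ^ 2 - 1 := by
            rw [← Real.rpow_mul ht.le]
            norm_num
          have h3 : ((1:ℝ)/2) ^ ((2:ℝ)/3) = (2:ℝ) ^ (-(2:ℝ)/3) := by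
            rw [show (1:ℝ)/2 = 2⁻¹ from by norm_num,
              Real.inv_rpow (by norm_num : (0:ℝ) ≤ 2),
              ← Real.rpow_neg (by norm_num : (0:ℝ) ≤ 2)]
            norm_num
          rw [h1, Real.mul_rpow (by norm_num) (Real.rpow_nonneg ht.le _), h2, h3]
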